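/- Fix c ∈ ℝ and define f : ℝ² → ℝ³ by f(u,v) = (e^v cosh u, c, e^v(−(c/2) cosh u + sinh u)). Then, with g the Lorentzian Heisenberg metric: g_{f(u,v)}(f_u, f_u) = −e^{2v}, g_{f(u,v)}(f_v, f_v) = e^{2v}, and g_{f(u,v)}(f_u, f_v) = 0 for all (u,v) (so f is a conformal timelike immersion); moreover f(u,0) = β(u) := (cosh u, c, −(c/2) cosh u + sinh u), and the vector field V(u) = (0, 1, (cosh u)/2) satisfies g_{β(u)}(V, V) = 1 and g_{β(u)}(V, f_u(u,0)) = g_{β(u)}(V, f_v(u,0)) = 0. -/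

import Mathlib

/-- The contact form of the Lorentzian Heisenberg group at p = (x,y,z):
ω_p(X) = (y/2)X₁ − (x/2)X₂ + X₃. -/
noncomputable def ωH (p X : ℝ × ℝ × ℝ) : ℝ := p.2.1 / 2 * X.1 - p.1 / 2 * X.2.1 + X.2.2

/-- The Lorentzian Heisenberg metric: g_p(X,Y) = X₁Y₁ + X₂Y₂ − ω_p(X)ω_p(Y). -/
noncomputable def gH (p X Y : ℝ × ℝ × ℝ) : ℝ := X.1 * Y.1 + X.2.1 * Y.2.1 - ωH p X * ωH p Y

/-- The surface f(u,v) = (e^v cosh u, c, e^v(−(c/2)cosh u + sinh u)) in the Lorentzian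
Heisenberg group is a conformal timelike immersion (g(f_u,f_u) = −e^{2v},
g(f_v,f_v) = e^{2v}, g(f_u,f_v) = 0) containing the curve
β(u) = (cosh u, c, −(c/2)cosh u + sinh u), with unit spacelike normal
V(u) = (0, 1, cosh u / 2) along β. -/
theorem heisenberg_vertical_plane (c : ℝ)
    (f : ℝ × ℝ → ℝ × ℝ × ℝ)
    (hf : ∀ p : ℝ × ℝ, f p = (Real.exp p.2 * Real.cosh p.1, c,
      Real.exp p.2 * (-(c / 2) * Real.cosh p.1 + Real.sinh p.1))) :
    (∀ p : ℝ × ℝ,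
      gH (f p) (fderiv ℝ f p (1, 0)) (fderiv ℝ f p (1, 0)) = -Real.exp (2 * p.2) ∧
      gH (f p) (fderiv ℝ f p (0, 1)) (fderiv ℝ f p (0, 1)) = Real.exp (2 * p.2) ∧
      gH (f p) (fderiv ℝ f p (1, 0)) (fderiv ℝ f p (0, 1)) = 0) ∧
    (∀ u : ℝ, f (u, 0) =
      (Real.cosh u, c, -(c / 2) * Real.cosh u + Real.sinh u)) ∧
    (∀ u : ℝ,
      gH (f (u, 0)) (0, 1, Real.cosh u / 2) (0, 1, Real.cosh u / 2) = 1 ∧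
      gH (f (u, 0)) (0, 1, Real.cosh u / 2) (fderiv ℝ f (u, 0) (1, 0)) = 0 ∧
      gH (f (u, 0)) (0, 1, Real.cosh u / 2) (fderiv ℝ f (u, 0) (0, 1)) = 0) := by
  have hfun : f = fun q : ℝ × ℝ => (Real.exp q.2 * Real.cosh q.1, c,
      Real.exp q.2 * (-(c / 2) * Real.cosh q.1 + Real.sinh q.1)) := funext hf
  subst hfun
  have key : ∀ p : ℝ × ℝ,
      fderiv ℝ (fun q : ℝ × ℝ => (Real.exp q.2 * Real.cosh q.1, c,
        Real.exp q.2 * (-(c / 2) * Real.cosh q.1 + Real.sinh q.1))) p (1, 0)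
        = (Real.exp p.2 * Real.sinh p.1, 0,
            Real.exp p.2 * (-(c / 2) * Real.sinh p.1 + Real.cosh p.1)) ∧
      fderiv ℝ (fun q : ℝ × ℝ => (Real.exp q.2 * Real.cosh q.1, c,
        Real.exp q.2 * (-(c / 2) * Real.cosh q.1 + Real.sinh q.1))) p (0, 1)
        = (Real.exp p.2 * Real.cosh p.1, 0,
            Real.exp p.2 * (-(c / 2) * Real.cosh p.1 + Real.sinh p.1)) := by
    intro p
    have he : HasFDerivAt (fun q : ℝ × ℝ => Real.exp q.2)
        (Real.exp p.2 • ContinuousLinearMap.snd ℝ ℝ ℝ) p := (hasFDerivAt_snd).exp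
    have hc : HasFDerivAt (fun q : ℝ × ℝ => Real.cosh q.1)
        (Real.sinh p.1 • ContinuousLinearMap.fst ℝ ℝ ℝ) p := (hasFDerivAt_fst).cosh
    have hs : HasFDerivAt (fun q : ℝ × ℝ => Real.sinh q.1)
        (Real.cosh p.1 • ContinuousLinearMap.fst ℝ ℝ ℝ) p := (hasFDerivAt_fst).sinh
    have hg : HasFDerivAt (fun q : ℝ × ℝ => -(c / 2) * Real.cosh q.1 + Real.sinh q.1)
        ((-(c / 2)) • (Real.sinh p.1 • ContinuousLinearMap.fst ℝ ℝ ℝ)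
          + Real.cosh p.1 • ContinuousLinearMap.fst ℝ ℝ ℝ) p := (hc.const_mul _).add hs
    have h1 := he.fun_mul hc
    have h3 := he.fun_mul hg
    have H := h1.prodMk ((hasFDerivAt_const c p).prodMk h3)
    rw [H.fderiv]
    constructor <;>
      simp [ContinuousLinearMap.prod_apply, ContinuousLinearMap.add_apply,
        ContinuousLinearMap.smul_apply] <;> (try constructor) <;> first | trivial | ring
  refine ⟨?_, ?_, ?_⟩
  · intro p
    obtain ⟨k1, k2⟩ := key p
    rw [k1, k2]
    have hch := Real.cosh_sq_sub_sinh_sq p.1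
    have h2v : Real.exp (2 * p.2) = Real.exp p.2 * Real.exp p.2 := by
      rw [two_mul, Real.exp_add]
    refine ⟨?_, ?_, ?_⟩ <;> simp only [gH, ωH] <;> nlinarith [hch, h2v]
  · intro u; simp
  · intro u
    obtain ⟨k1, k2⟩ := key (u, 0)
    rw [k1, k2]
    have hch := Real.cosh_sq_sub_sinh_sq u
    refine ⟨?_, ?_, ?_⟩ <;> simp only [gH, ωH] <;> simp <;> try nlinarith [hch]
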